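/- Let T be a tree, let (u_n)_{n ∈ ℕ} be a sequence of pairwise distinct vertices of T, and let H be the convex hull of the set {u_n : n ∈ ℕ} in T. Then the following conditions are equivalent: (i) H is almost a ray; (ii) for every non-degenerate labeling l : V(T) → [0,∞), if the sequence (u_n)_{n ∈ ℕ} has a Cauchy subsequence in the ultrametric space (V(T), d_l), then (u_n)_{n ∈ ℕ} is itself a Cauchy sequence in (V(T), d_l). -/

import Mathlib

open SimpleGraph

/-- `d` is an ultrametric on `V`: a metric satisfying the strong triangle inequality. -/
def IsUltrametricOn {V : Type*} (d : V → V → ℝ) : Prop :=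
  (∀ x y, 0 ≤ d x y) ∧ (∀ x y, d x y = d y x) ∧
    (∀ x y, d x y = 0 ↔ x = y) ∧
    ∀ x y z, d x y ≤ max (d x z) (d z y)

/-- The vertex labeling `l` of the graph `G` is non-degenerate:
`max {l u, l v} > 0` for every edge `{u, v}`. -/
def NondegenerateLabeling {V : Type*} (G : SimpleGraph V) (l : V → ℝ) : Prop :=
  ∀ u v, G.Adj u v → 0 < max (l u) (l v)

/-- `d` is the function `d_l` generated by the vertex labeling `l` on the tree `G`:
`d u u = 0`, and for `u ≠ v`, `d u v` is the maximum of the labels of the vertices of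
the (unique) path joining `u` and `v`. -/
def IsLabelDist {V : Type*} (G : SimpleGraph V) (l : V → ℝ) (d : V → V → ℝ) : Prop :=
  (∀ u, d u u = 0) ∧
    ∀ u v : V, u ≠ v → ∀ p : G.Walk u v, p.IsPath →
      IsGreatest (l '' {w | w ∈ p.support}) (d u v)

/-- `x` is a Cauchy sequence with respect to the distance function `d`. -/
def CauchyWith {V : Type*} (d : V → V → ℝ) (x : ℕ → V) : Prop :=
  ∀ ε : ℝ, 0 < ε → ∃ N : ℕ, ∀ m ≥ N, ∀ n ≥ N, d (x m) (x n) < ε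

/-- The set `A` is totally bounded with respect to the distance function `d`:
for every `r > 0` it is covered by finitely many open balls of radius `r` centered in `A`. -/
def TotallyBoundedWith {V : Type*} (d : V → V → ℝ) (A : Set V) : Prop :=
  ∀ r : ℝ, 0 < r → ∃ s : Finset V, ↑s ⊆ A ∧ ∀ x ∈ A, ∃ c ∈ s, d c x < r

/-- The space `V` with distance `d` is compact: every cover of `V` by open balls
(given by center–radius pairs) contains a finite subcover. -/
def CompactWith {V : Type*} (d : V → V → ℝ) : Prop :=
  ∀ F : Set (V × ℝ), (∀ x : V, ∃ p ∈ F, d p.1 x < p.2) →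
    ∃ s : Finset (V × ℝ), ↑s ⊆ F ∧ ∀ x : V, ∃ p ∈ s, d p.1 x < p.2

/-- The subgraph `R` of `G` is a ray: its vertices can be enumerated as a sequence
`f 0, f 1, …` of pairwise distinct vertices, with edges exactly `{f n, f (n+1)}`. -/
def IsRaySubgraph {V : Type*} {G : SimpleGraph V} (R : G.Subgraph) : Prop :=
  ∃ f : ℕ → V, Function.Injective f ∧ R.verts = Set.range f ∧
    ∀ x y, R.Adj x y ↔ ∃ n, (x = f n ∧ y = f (n + 1)) ∨ (x = f (n + 1) ∧ y = f n)

/-- The subgraph `T₀` of `G` is a finite subtree. -/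
def IsFiniteSubtree {V : Type*} {G : SimpleGraph V} (T₀ : G.Subgraph) : Prop :=
  T₀.verts.Finite ∧ T₀.coe.IsTree

/-- The subgraph `H` of `G` is almost a ray: `H` is the union of a ray and a finite subtree. -/
def IsAlmostRaySubgraph {V : Type*} {G : SimpleGraph V} (H : G.Subgraph) : Prop :=
  ∃ R T₀ : G.Subgraph, IsRaySubgraph R ∧ IsFiniteSubtree T₀ ∧ T₀ ⊔ R = H

/-- The graph `G` is almost a ray: `G` is the union of a ray and a finite subtree. -/
def IsAlmostRayGraph {V : Type*} (G : SimpleGraph V) : Prop :=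
  ∃ R T₀ : G.Subgraph, IsRaySubgraph R ∧ IsFiniteSubtree T₀ ∧ T₀ ⊔ R = ⊤

/-- `H` is the convex hull of the vertex set `A` in `G`: a subtree containing `A`
which is a subgraph of every subtree of `G` containing `A`. -/
def IsConvexHullSubtree {V : Type*} (G : SimpleGraph V) (A : Set V) (H : G.Subgraph) : Prop :=
  H.coe.IsTree ∧ A ⊆ H.verts ∧
    ∀ H' : G.Subgraph, H'.coe.IsTree → A ⊆ H'.verts → H ≤ H'


namespace Stmt8
noncomputable section
variable {V : Type*} {G : SimpleGraph V}

local instance : DecidableEq V := Classical.decEq _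
attribute [local instance] Classical.propDecidable

/-- the unique path between two vertices of a tree -/
noncomputable def tpath (hG : G.IsTree) (x y : V) : G.Walk x y :=
  (hG.existsUnique_path x y).exists.choose

lemma tpath_isPath (hG : G.IsTree) (x y : V) : (tpath hG x y).IsPath :=
  (hG.existsUnique_path x y).exists.choose_spec

lemma eq_tpath (hG : G.IsTree) {x y : V} {p : G.Walk x y} (hp : p.IsPath) :
    p = tpath hG x y :=
  (hG.existsUnique_path x y).unique hp (tpath_isPath hG x y)

lemma start_mem_tpath (hG : G.IsTree) (x y : V) : x ∈ (tpath hG x y).support :=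
  Walk.start_mem_support _

lemma end_mem_tpath (hG : G.IsTree) (x y : V) : y ∈ (tpath hG x y).support :=
  Walk.end_mem_support _

lemma tpath_support_symm (hG : G.IsTree) (x y : V) :
    (tpath hG x y).support = (tpath hG y x).support.reverse := by
  have h : (tpath hG y x).reverse = tpath hG x y :=
    eq_tpath hG ((tpath_isPath hG y x).reverse)
  rw [← h, Walk.support_reverse]

lemma mem_tpath_symm (hG : G.IsTree) {x y c : V} (h : c ∈ (tpath hG x y).support) :
    c ∈ (tpath hG y x).support := by
  rw [tpath_support_symm hG x y, List.mem_reverse] at h; exact h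

/-- support triangle inequality -/
lemma tpath_support_triangle (hG : G.IsTree) {x y z c : V}
    (hc : c ∈ (tpath hG x z).support) :
    c ∈ (tpath hG x y).support ∨ c ∈ (tpath hG y z).support := by
  have hb : ((tpath hG x y).append (tpath hG y z)).bypass = tpath hG x z :=
    eq_tpath hG (Walk.bypass_isPath _)
  rw [← hb] at hc
  have := Walk.support_bypass_subset _ hc
  rwa [Walk.mem_support_append_iff] at this

lemma tpath_mem_of_subwalk_left (hG : G.IsTree) {x y z : V}
    (h : z ∈ (tpath hG x y).support) :
    ((tpath hG x y).takeUntil z h) = tpath hG x z :=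
  eq_tpath hG ((tpath_isPath hG x y).takeUntil h)

lemma tpath_mem_of_subwalk_right (hG : G.IsTree) {x y z : V}
    (h : z ∈ (tpath hG x y).support) :
    ((tpath hG x y).dropUntil z h) = tpath hG z y :=
  eq_tpath hG ((tpath_isPath hG x y).dropUntil h)

lemma tpath_support_left_subset (hG : G.IsTree) {x y z : V}
    (h : z ∈ (tpath hG x y).support) :
    (tpath hG x z).support ⊆ (tpath hG x y).support := by
  rw [← tpath_mem_of_subwalk_left hG h]
  exact Walk.support_takeUntil_subset _ h

lemma tpath_support_right_subset (hG : G.IsTree) {x y z : V}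
    (h : z ∈ (tpath hG x y).support) :
    (tpath hG z y).support ⊆ (tpath hG x y).support := by
  rw [← tpath_mem_of_subwalk_right hG h]
  exact Walk.support_dropUntil_subset _ h

/-- junction lemma: if `z` is on the path from `x` to `y`, and `c` is on both
the path from `x` to `z` and the path from `z` to `y`, then `c = z`. -/
lemma junction (hG : G.IsTree) {x y z c : V} (h : z ∈ (tpath hG x y).support)
    (h1 : c ∈ (tpath hG x z).support) (h2 : c ∈ (tpath hG z y).support) : c = z := by
  by_contra hne
  rw [← tpath_mem_of_subwalk_left hG h] at h1
  rw [← tpath_mem_of_subwalk_right hG h] at h2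
  have hspec := Walk.take_spec (tpath hG x y) h
  have hnodup := (tpath_isPath hG x y).support_nodup
  rw [← hspec, Walk.support_append] at hnodup
  have hdisj := List.disjoint_of_nodup_append hnodup
  have h2' : c ∈ ((tpath hG x y).dropUntil z h).support.tail := by
    have := Walk.support_eq_cons ((tpath hG x y).dropUntil z h)
    rw [this] at h2
    rcases List.mem_cons.1 h2 with h | h
    · exact absurd h hne
    · exact h
  exact hdisj h1 h2'


/-- `c` separates `x` from `y` (or is one of them): `c` lies on the unique path. -/
def Sep (hG : G.IsTree) (c x y : V) : Prop := c ∈ (tpath hG x y).support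

lemma sep_comm (hG : G.IsTree) {c x y : V} : Sep hG c x y ↔ Sep hG c y x :=
  ⟨mem_tpath_symm hG, mem_tpath_symm hG⟩

lemma not_sep_trans (hG : G.IsTree) {c x y z : V} (h1 : ¬Sep hG c x y)
    (h2 : ¬Sep hG c y z) : ¬Sep hG c x z := fun h =>
  (tpath_support_triangle hG h).elim h1 h2

lemma sep_self_left (hG : G.IsTree) (x y : V) : Sep hG x x y := start_mem_tpath hG x y
lemma sep_self_right (hG : G.IsTree) (x y : V) : Sep hG y x y := end_mem_tpath hG x y

lemma ne_of_not_sep_left (hG : G.IsTree) {c x y : V} (h : ¬Sep hG c x y) : c ≠ x :=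
  fun he => h (he ▸ sep_self_left hG x y)
lemma ne_of_not_sep_right (hG : G.IsTree) {c x y : V} (h : ¬Sep hG c x y) : c ≠ y :=
  fun he => h (he ▸ sep_self_right hG x y)

lemma mem_walk_of_sep (hG : G.IsTree) {c x y : V} (h : Sep hG c x y)
    (w : G.Walk x y) : c ∈ w.support := by
  have hb : w.bypass = tpath hG x y := eq_tpath hG (Walk.bypass_isPath _)
  exact Walk.support_bypass_subset w (hb ▸ h)

lemma exists_cons_of_ne (hG : G.IsTree) {x y : V} (hxy : x ≠ y) :
    ∃ (w : V) (h : G.Adj x w) (q : G.Walk w y), q.IsPath ∧ x ∉ q.support ∧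
      tpath hG x y = Walk.cons h q := by
  cases htp : tpath hG x y with
  | nil => exact absurd rfl hxy
  | cons h' q =>
    have hp : (Walk.cons h' q).IsPath := htp ▸ tpath_isPath hG x y
    rw [Walk.cons_isPath_iff] at hp
    exact ⟨_, h', q, hp.1, hp.2, rfl⟩

/-- the second vertex on the path from `x` to `y`. -/
def nxt (hG : G.IsTree) (x y : V) : V := (tpath hG x y).getVert 1

lemma nxt_eq_of_cons (hG : G.IsTree) {x y w : V} {h : G.Adj x w} {q : G.Walk w y}
    (htp : tpath hG x y = Walk.cons h q) : nxt hG x y = w := by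
  rw [nxt, htp, Walk.getVert_cons_succ, Walk.getVert_zero]

lemma adj_nxt (hG : G.IsTree) {x y : V} (hxy : x ≠ y) : G.Adj x (nxt hG x y) := by
  obtain ⟨w, h, q, _, _, htp⟩ := exists_cons_of_ne hG hxy
  rw [nxt_eq_of_cons hG htp]; exact h

lemma not_sep_nxt (hG : G.IsTree) {x y : V} (hxy : x ≠ y) :
    ¬ Sep hG x (nxt hG x y) y := by
  obtain ⟨w, h, q, hq, hxq, htp⟩ := exists_cons_of_ne hG hxy
  rw [nxt_eq_of_cons hG htp]
  intro hs
  rw [Sep, ← eq_tpath hG hq] at hs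
  exact hxq hs

lemma nxt_mem_tpath (hG : G.IsTree) {x y : V} (hxy : x ≠ y) :
    nxt hG x y ∈ (tpath hG x y).support := by
  obtain ⟨w, h, q, hq, hxq, htp⟩ := exists_cons_of_ne hG hxy
  rw [nxt_eq_of_cons hG htp, htp, Walk.support_cons]
  exact List.mem_cons_of_mem _ (Walk.start_mem_support q)

lemma eq_nxt (hG : G.IsTree) {x y w : V} (hadj : G.Adj x w)
    (hns : ¬ Sep hG x w y) : w = nxt hG x y := by
  have hp : (Walk.cons hadj (tpath hG w y)).IsPath := by
    rw [Walk.cons_isPath_iff]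
    exact ⟨tpath_isPath hG w y, hns⟩
  have := eq_tpath hG hp
  rw [nxt, ← this, Walk.getVert_cons_succ, Walk.getVert_zero]


/-! ### Subgraph lemmas -/

lemma map_coe_le (H' : G.Subgraph) (S : H'.coe.Subgraph) : S.map H'.hom ≤ H' := by
  constructor
  · rintro v ⟨w, hw, rfl⟩
    exact w.2
  · rintro v w ⟨a, b, hab, rfl, rfl⟩
    exact S.adj_sub hab

lemma subgraph_connected_def {H' : G.Subgraph} (hc : H'.Connected) {x y : V}
    (hx : x ∈ H'.verts) (hy : y ∈ H'.verts) : H'.coe.Reachable ⟨x, hx⟩ ⟨y, hy⟩ :=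
  hc ⟨x, hx⟩ ⟨y, hy⟩

/-- The unique path between two vertices of a connected subgraph stays inside it. -/
lemma tpath_toSubgraph_le (hG : G.IsTree) {H' : G.Subgraph} (hc : H'.Connected)
    {x y : V} (hx : x ∈ H'.verts) (hy : y ∈ H'.verts) :
    (tpath hG x y).toSubgraph ≤ H' := by
  obtain ⟨q⟩ := subgraph_connected_def hc hx hy
  have hmap : q.bypass.map H'.hom = tpath hG x y :=
    eq_tpath hG (Walk.map_isPath_of_injective Subgraph.hom_injective q.bypass_isPath)
  calc (tpath hG x y).toSubgraph = (q.bypass.map H'.hom).toSubgraph := congrArg Walk.toSubgraph hmap.symm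
  _ = q.bypass.toSubgraph.map H'.hom := Walk.toSubgraph_map _ _
  _ ≤ H' := map_coe_le H' _

lemma tpath_support_subset_verts (hG : G.IsTree) {H' : G.Subgraph} (hc : H'.Connected)
    {x y c : V} (hx : x ∈ H'.verts) (hy : y ∈ H'.verts)
    (hmem : c ∈ (tpath hG x y).support) : c ∈ H'.verts :=
  (tpath_toSubgraph_le hG hc hx hy).1 ((tpath hG x y).mem_verts_toSubgraph.2 hmem)

lemma coe_isAcyclic_of_isAcyclic (hac : G.IsAcyclic) (H' : G.Subgraph) :
    H'.coe.IsAcyclic := fun _ c hc =>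
  hac (c.map H'.hom) (hc.map Subgraph.hom_injective)

lemma toSubgraph_verts_finite {x y : V} (p : G.Walk x y) : p.toSubgraph.verts.Finite := by
  rw [Walk.verts_toSubgraph]
  exact p.support.finite_toSet

/-- a closed walk from `r` visiting a list of targets -/
def tourWalk (hG : G.IsTree) (r : V) : List V → G.Walk r r
  | [] => Walk.nil
  | t :: ts => ((tpath hG r t).append (tpath hG t r)).append (tourWalk hG r ts)

lemma tourWalk_verts (hG : G.IsTree) (r : V) (L : List V) {t : V} (ht : t ∈ L) :
    t ∈ (tourWalk hG r L).support := by
  induction L with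
  | nil => cases ht
  | cons a as ih =>
    rw [tourWalk, Walk.mem_support_append_iff, Walk.mem_support_append_iff]
    rcases List.mem_cons.1 ht with rfl | h
    · exact Or.inl (Or.inr (start_mem_tpath hG t r))
    · exact Or.inr (ih h)

lemma tourWalk_toSubgraph_le (hG : G.IsTree) {H' : G.Subgraph} (hc : H'.Connected)
    {r : V} (hr : r ∈ H'.verts) {L : List V} (hL : ∀ t ∈ L, t ∈ H'.verts) :
    (tourWalk hG r L).toSubgraph ≤ H' := by
  induction L with
  | nil =>
    rw [tourWalk]
    exact (SimpleGraph.singletonSubgraph_le_iff r H').2 hr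
  | cons a as ih =>
    rw [tourWalk, Walk.toSubgraph_append, Walk.toSubgraph_append]
    have ha := hL a List.mem_cons_self
    exact sup_le (sup_le (tpath_toSubgraph_le hG hc hr ha) (tpath_toSubgraph_le hG hc ha hr))
      (ih fun t h => hL t (List.mem_cons_of_mem a h))


/-! ### Ray walks -/

variable {f : ℕ → V}

/-- walk along a one-sided infinite path from `f i` to `f (i+k)` -/
def rayWalk (hadj : ∀ n, G.Adj (f n) (f (n + 1))) (i : ℕ) : (k : ℕ) → G.Walk (f i) (f (i + k))
  | 0 => Walk.nil
  | k + 1 => (rayWalk hadj i k).concat (hadj (i + k))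

lemma rayWalk_support (hadj : ∀ n, G.Adj (f n) (f (n + 1))) (i k : ℕ) :
    (rayWalk hadj i k).support = (List.range (k + 1)).map (fun j => f (i + j)) := by
  induction k with
  | zero => simp [rayWalk, List.range_succ]
  | succ k ih =>
    rw [rayWalk, Walk.support_concat, ih, List.range_succ (n := k + 1)]
    simp

lemma mem_rayWalk_support (hadj : ∀ n, G.Adj (f n) (f (n + 1))) {i k : ℕ} {c : V} :
    c ∈ (rayWalk hadj i k).support ↔ ∃ j ≤ k, c = f (i + j) := by
  rw [rayWalk_support]
  simp only [List.mem_map, List.mem_range]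
  constructor
  · rintro ⟨j, hj, rfl⟩; exact ⟨j, Nat.lt_succ_iff.1 hj, rfl⟩
  · rintro ⟨j, hj, rfl⟩; exact ⟨j, Nat.lt_succ_iff.2 hj, rfl⟩

lemma rayWalk_isPath (hadj : ∀ n, G.Adj (f n) (f (n + 1))) (hf : Function.Injective f)
    (i k : ℕ) : (rayWalk hadj i k).IsPath := by
  rw [Walk.isPath_def, rayWalk_support]
  refine List.Nodup.map ?_ List.nodup_range
  intro a b h
  exact Nat.add_left_cancel (hf h)

lemma rayWalk_eq_tpath (hG : G.IsTree) (hadj : ∀ n, G.Adj (f n) (f (n + 1)))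
    (hf : Function.Injective f) (i k : ℕ) :
    rayWalk hadj i k = tpath hG (f i) (f (i + k)) :=
  eq_tpath hG (rayWalk_isPath hadj hf i k)

lemma rayWalk_edges (hadj : ∀ n, G.Adj (f n) (f (n + 1))) {i k n : ℕ}
    (h1 : i ≤ n) (h2 : n < i + k) :
    s(f n, f (n + 1)) ∈ (rayWalk hadj i k).edges := by
  induction k with
  | zero => omega
  | succ k ih =>
    rw [rayWalk, Walk.edges_concat]
    rw [List.concat_eq_append, List.mem_append]
    rcases Nat.lt_or_ge n (i + k) with h | h
    · exact Or.inl (ih h)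
    · have : n = i + k := by omega
      subst this
      exact Or.inr (List.mem_singleton.2 rfl)

lemma adj_of_mem_edges_toSubgraph_le {x y : V} {p : G.Walk x y} {H' : G.Subgraph}
    (hle : p.toSubgraph ≤ H') {a b : V} (hab : s(a, b) ∈ p.edges) : H'.Adj a b := by
  have : p.toSubgraph.Adj a b := Subgraph.mem_edgeSet.1 (p.mem_edges_toSubgraph.2 hab)
  exact hle.2 this


/-! ### the canonical label distance -/

/-- the distance induced by a labeling on a tree -/
def dOf (hG : G.IsTree) (l : V → ℝ) (x y : V) : ℝ :=
  if x = y then 0 else sSup (l '' {w | w ∈ (tpath hG x y).support})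

lemma isGreatest_dOf (hG : G.IsTree) (l : V → ℝ) {x y : V} (hxy : x ≠ y) :
    IsGreatest (l '' {w | w ∈ (tpath hG x y).support}) (dOf hG l x y) := by
  have hfin : (l '' {w | w ∈ (tpath hG x y).support}).Finite :=
    ((tpath hG x y).support.finite_toSet).image l
  have hne : (l '' {w | w ∈ (tpath hG x y).support}).Nonempty :=
    ⟨l x, x, start_mem_tpath hG x y, rfl⟩
  rw [dOf, if_neg hxy]
  exact ⟨hne.csSup_mem hfin, fun b hb => le_csSup hfin.bddAbove hb⟩

lemma dOf_isLabelDist (hG : G.IsTree) (l : V → ℝ) : IsLabelDist G l (dOf hG l) := by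
  refine ⟨fun v => if_pos rfl, fun x y hxy p hp => ?_⟩
  rw [eq_tpath hG hp]
  exact isGreatest_dOf hG l hxy

/-! ### The forward direction -/

lemma forward_dir {G : SimpleGraph V} (hG : G.IsTree) {u : ℕ → V}
    (hu : Function.Injective u) {H : G.Subgraph} (huH : ∀ n, u n ∈ H.verts)
    (hAR : IsAlmostRaySubgraph H) {l : V → ℝ} {d : V → V → ℝ}
    (hd : IsLabelDist G l d) {φ : ℕ → ℕ} (hφ : StrictMono φ)
    (hC : CauchyWith d (u ∘ φ)) : CauchyWith d u := by
  classical
  obtain ⟨R, T₀, ⟨f, hfinj, hfverts, hfadj⟩, ⟨hT₀fin, _⟩, hsup⟩ := hAR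
  have hadj : ∀ n, G.Adj (f n) (f (n + 1)) :=
    fun n => R.adj_sub ((hfadj _ _).2 ⟨n, Or.inl ⟨rfl, rfl⟩⟩)
  have hverts : H.verts = T₀.verts ∪ R.verts := by rw [← hsup]; rfl
  -- positions of the sequence on the ray, eventually
  have hfin : ∀ P : ℕ, ∃ N : ℕ, ∀ n ≥ N, ∃ k ≥ P, f k = u n := by
    intro P
    have hbad : {n | ¬ ∃ k ≥ P, f k = u n} ⊆ u ⁻¹' (T₀.verts ∪ f '' Set.Iio P) := by
      intro n hn
      have := huH n
      rw [hverts] at this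
      rcases this with h | h
      · exact Or.inl h
      · rw [hfverts] at h
        obtain ⟨k, hk⟩ := h
        rcases Nat.lt_or_ge k P with h' | h'
        · exact Or.inr ⟨k, h', hk⟩
        · exact absurd ⟨k, h', hk⟩ hn
    have hSfin : (T₀.verts ∪ f '' Set.Iio P).Finite :=
      hT₀fin.union ((Set.finite_Iio P).image f)
    have hbadfin : {n | ¬ ∃ k ≥ P, f k = u n}.Finite :=
      (hSfin.preimage (hu.injOn)).subset hbad
    obtain ⟨N, hN⟩ := hbadfin.bddAbove
    refine ⟨N + 1, fun n hn => ?_⟩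
    by_contra hcon
    exact absurd (hN hcon) (by omega)
  intro ε hε
  obtain ⟨N₁, hN₁⟩ := hC ε hε
  obtain ⟨N₂, hN₂⟩ := hfin 0
  set K := max N₁ N₂ with hK
  -- positions of the subsequence
  have hq : ∀ k ≥ K, ∃ j, f j = u (φ k) := by
    intro k hk
    obtain ⟨j, _, hj⟩ := hN₂ (φ k) (le_trans (le_trans (le_max_right _ _) hk) hφ.le_apply)
    exact ⟨j, hj⟩
  set q : ℕ → ℕ := fun k => if h : ∃ j, f j = u (φ k) then h.choose else 0 with hqdef
  have hqs : ∀ k ≥ K, f (q k) = u (φ k) := by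
    intro k hk
    have h := hq k hk
    simp only [hqdef, dif_pos h]
    exact h.choose_spec
  have hqinj : ∀ k ≥ K, ∀ k' ≥ K, q k = q k' → k = k' := by
    intro k hk k' hk' he
    have : u (φ k) = u (φ k') := by rw [← hqs k hk, ← hqs k' hk', he]
    exact hφ.injective (hu this)
  have hqunbd : ∀ M : ℕ, ∃ k ≥ K, q k > M := by
    intro M
    by_contra hcon
    push_neg at hcon
    have hginj : Function.Injective (fun i => q (K + i)) := by
      intro a b hab
      have := hqinj (K + a) (by omega) (K + b) (by omega) hab
      omega
    have : Set.range (fun i => q (K + i)) ⊆ Set.Iic M := by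
      rintro _ ⟨i, rfl⟩
      exact hcon (K + i) (by omega)
    exact (Set.infinite_range_of_injective hginj) ((Set.finite_Iic M).subset this)
  set s₀ := q K with hs₀
  -- all labels far out on the ray are small
  have hsmall : ∀ j ≥ s₀, l (f j) < ε := by
    intro j hj
    obtain ⟨k, hk, hkj⟩ := hqunbd j
    have hKK : K ≠ k := fun he => by rw [← he] at hkj; omega
    have hne : u (φ K) ≠ u (φ k) := fun he => hKK (hφ.injective (hu he))
    have hdlt : d (u (φ K)) (u (φ k)) < ε := hN₁ K (le_max_left _ _) k (le_trans (le_max_left _ _) hk)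
    have he2 : s₀ + (q k - s₀) = q k := by omega
    have hfs : f s₀ = u (φ K) := hqs K (le_refl K)
    have hfk : f (q k) = u (φ k) := hqs k hk
    rw [← hfs, ← hfk] at hdlt hne
    have hg := (hd.2 _ _ hne ((rayWalk hadj s₀ (q k - s₀)).copy rfl (congrArg f he2))
      ((Walk.isPath_copy _ _ _).2 (rayWalk_isPath hadj hfinj _ _))).2
    rw [Walk.support_copy] at hg
    have hmem : f j ∈ (rayWalk hadj s₀ (q k - s₀)).support := by
      rw [mem_rayWalk_support]
      exact ⟨j - s₀, by omega, by rw [show s₀ + (j - s₀) = j by omega]⟩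
    calc l (f j) ≤ d (f s₀) (f (q k)) := hg ⟨f j, hmem, rfl⟩
    _ < ε := hdlt
  obtain ⟨N₃, hN₃⟩ := hfin s₀
  refine ⟨N₃, fun m hm n hn => ?_⟩
  by_cases hmn : u m = u n
  · rw [hmn, hd.1]; exact hε
  · obtain ⟨km, hkm, hfm⟩ := hN₃ m hm
    obtain ⟨kn, hkn, hfn⟩ := hN₃ n hn
    rcases le_total km kn with hle | hle
    · have he2 : km + (kn - km) = kn := by omega
      rw [← hfm, ← hfn] at hmn ⊢
      obtain ⟨w, hw, hlw⟩ := (hd.2 _ _ hmn ((rayWalk hadj km (kn - km)).copy rfl (congrArg f he2))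
        ((Walk.isPath_copy _ _ _).2 (rayWalk_isPath hadj hfinj _ _))).1
      rw [Set.mem_setOf_eq, Walk.support_copy, mem_rayWalk_support] at hw
      obtain ⟨j, hj, rfl⟩ := hw
      rw [← hlw]
      exact hsmall _ (by omega)
    · have he2 : kn + (km - kn) = km := by omega
      rw [← hfm, ← hfn] at hmn ⊢
      obtain ⟨w, hw, hlw⟩ := (hd.2 _ _ hmn
        (((rayWalk hadj kn (km - kn)).copy rfl (congrArg f he2)).reverse)
        (((Walk.isPath_copy _ _ _).2 (rayWalk_isPath hadj hfinj _ _)).reverse)).1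
      rw [Set.mem_setOf_eq, Walk.support_reverse, List.mem_reverse, Walk.support_copy,
        mem_rayWalk_support] at hw
      obtain ⟨j, hj, rfl⟩ := hw
      rw [← hlw]
      exact hsmall _ (by omega)


/-! ### Bad pair gives a bad labeling -/

/-- the union of path supports between far elements of the subsequence -/
def Dset (hG : G.IsTree) (u : ℕ → V) (a : ℕ → ℕ) (k : ℕ) : Set V :=
  {v | ∃ i, k ≤ i ∧ ∃ j, k ≤ j ∧ v ∈ (tpath hG (u (a i)) (u (a j))).support}

lemma Dset_antitone (hG : G.IsTree) (u : ℕ → V) (a : ℕ → ℕ) {k k' : ℕ} (h : k ≤ k') :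
    Dset hG u a k' ⊆ Dset hG u a k := by
  rintro v ⟨i, hi, j, hj, hv⟩
  exact ⟨i, le_trans h hi, j, le_trans h hj, hv⟩

/-- the labeling associated to a subsequence -/
def lab (hG : G.IsTree) (u : ℕ → V) (a : ℕ → ℕ) (v : V) : ℝ :=
  if h : ∀ k, v ∈ Dset hG u a k then 0 else 1 / (Nat.find (not_forall.mp h) + 1)

lemma lab_nonneg (hG : G.IsTree) (u : ℕ → V) (a : ℕ → ℕ) (v : V) : 0 ≤ lab hG u a v := by
  rw [lab]
  split
  · exact le_refl 0
  · positivity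

lemma lab_le (hG : G.IsTree) (u : ℕ → V) (a : ℕ → ℕ) {v : V} {k : ℕ}
    (hv : v ∈ Dset hG u a k) : lab hG u a v ≤ 1 / (k + 2 : ℝ) := by
  rw [lab]
  split
  · positivity
  · rename_i h
    have hfind : k < Nat.find (not_forall.mp h) := by
      rw [Nat.lt_find_iff]
      intro m hm hmem
      exact hmem (Dset_antitone hG u a hm hv)
    rw [div_le_div_iff₀ (by positivity) (by positivity)]
    have : (k : ℝ) + 1 ≤ Nat.find (not_forall.mp h) := by exact_mod_cast hfind
    linarith

lemma lab_eq_one (hG : G.IsTree) (u : ℕ → V) (a : ℕ → ℕ) {v : V}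
    (hv : v ∉ Dset hG u a 0) : lab hG u a v = 1 := by
  rw [lab]
  split
  · rename_i h; exact absurd (h 0) hv
  · rename_i h
    have : Nat.find (not_forall.mp h) = 0 := by
      rw [Nat.find_eq_zero]; exact hv
    rw [this]; norm_num

lemma lab_pos_of_not_forall (hG : G.IsTree) (u : ℕ → V) (a : ℕ → ℕ) {v : V}
    (h : ¬ ∀ k, v ∈ Dset hG u a k) : 0 < lab hG u a v := by
  rw [lab, dif_neg h]
  positivity

/-- A bad pair `(a, B)` refutes the Cauchy statement. -/
lemma bad_pair_contra {G : SimpleGraph V} (hG : G.IsTree) {u : ℕ → V}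
    (hu : Function.Injective u) {a : ℕ → ℕ} {B : Set ℕ} (ha : StrictMono a)
    (hB : B.Infinite)
    (hBout : ∀ b ∈ B, ∀ i j, u b ∉ (tpath hG (u (a i)) (u (a j))).support)
    (hZ : ∀ x y : V, G.Adj x y → ∃ k, x ∉ Dset hG u a k ∨ y ∉ Dset hG u a k) :
    ¬ (∀ l : V → ℝ, (∀ w, 0 ≤ l w) → NondegenerateLabeling G l →
        ∀ d : V → V → ℝ, IsLabelDist G l d →
          (∃ φ : ℕ → ℕ, StrictMono φ ∧ CauchyWith d (u ∘ φ)) → CauchyWith d u) := by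
  intro hRHS
  set l := lab hG u a with hl
  set d := dOf hG l with hd
  have hnondeg : NondegenerateLabeling G l := by
    intro x y hxy
    by_cases hx : ∀ k, x ∈ Dset hG u a k
    · have hy : ¬ ∀ k, y ∈ Dset hG u a k := by
        intro hy
        obtain ⟨k, hk | hk⟩ := hZ x y hxy
        · exact hk (hx k)
        · exact hk (hy k)
      exact lt_max_iff.2 (Or.inr (lab_pos_of_not_forall hG u a hy))
    · exact lt_max_iff.2 (Or.inl (lab_pos_of_not_forall hG u a hx))
  have hCsub : CauchyWith d (u ∘ a) := by
    intro ε hε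
    obtain ⟨N, hN⟩ := exists_nat_one_div_lt hε
    refine ⟨N, fun i hi j hj => ?_⟩
    by_cases hij : i = j
    · subst hij
      simp only [Function.comp_apply]
      rw [hd, dOf, if_pos rfl]
      exact hε
    · have hne : u (a i) ≠ u (a j) := fun he => hij (ha.injective (hu he))
      obtain ⟨w, hw, hlw⟩ := (isGreatest_dOf hG l hne).1
      simp only [Function.comp_apply]
      rw [← hd] at hlw
      rw [← hlw]
      have hwD : w ∈ Dset hG u a N := ⟨i, hi, j, hj, hw⟩
      calc l w ≤ 1 / (N + 2 : ℝ) := lab_le hG u a hwD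
      _ < 1 / (N + 1 : ℝ) := by
          apply div_lt_div_of_pos_left one_pos (by positivity)
          linarith
      _ < ε := hN
  have hCu : CauchyWith d u :=
    hRHS l (lab_nonneg hG u a) hnondeg d (dOf_isLabelDist hG l) ⟨a, ha, hCsub⟩
  obtain ⟨N, hN⟩ := hCu 1 one_pos
  obtain ⟨b, hbB, hbN⟩ : ∃ b ∈ B, N < b := hB.exists_gt N
  have hne : u b ≠ u (b + 1) := fun he => by have := hu he; omega
  have hub : l (u b) = 1 := lab_eq_one hG u a (fun ⟨i, _, j, _, hmem⟩ => hBout b hbB i j hmem)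
  have hge : (1 : ℝ) ≤ d (u b) (u (b + 1)) := by
    rw [← hub]
    exact (isGreatest_dOf hG l hne).2 ⟨u b, start_mem_tpath hG _ _, rfl⟩
  have hlt := hN b (by omega) (b + 1) (by omega)
  linarith


/-! ### choice helpers -/

lemma exists_strictMono_mem {T : ℕ → Set ℕ} (hT : ∀ k, (T k).Infinite) :
    ∃ a : ℕ → ℕ, StrictMono a ∧ ∀ k, a k ∈ T k := by
  have h0 := (hT 0).nonempty
  have hstep : ∀ (k x : ℕ), ∃ y, y ∈ T (k + 1) ∧ x < y := fun k x => by
    obtain ⟨y, hy, hxy⟩ := (hT (k + 1)).exists_gt x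
    exact ⟨y, hy, hxy⟩
  choose g hg1 hg2 using hstep
  set a : ℕ → ℕ := fun k => Nat.rec h0.choose (fun k ak => g k ak) k with ha
  have hstep' : ∀ k, a (k + 1) = g k (a k) := fun k => rfl
  refine ⟨a, strictMono_nat_of_lt_succ (fun k => by rw [hstep']; exact hg2 k (a k)), ?_⟩
  intro k
  cases k with
  | zero => exact h0.choose_spec
  | succ k => rw [hstep']; exact hg1 k (a k)

/-- transversal extraction: if all "classes" are finite, an infinite pairwise
unrelated subsequence exists. -/
lemma exists_pairwise_transversal {S : Set ℕ} (hS : S.Infinite) {rel : ℕ → ℕ → Prop}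
    (hfin : ∀ n ∈ S, {m | m ∈ S ∧ rel n m}.Finite) :
    ∃ g : ℕ → ℕ, StrictMono g ∧ (∀ i, g i ∈ S) ∧ ∀ i j, i < j → ¬ rel (g i) (g j) := by
  classical
  set P : List ℕ → Set ℕ :=
    fun L => {x | x ∈ S ∧ ∀ m ∈ L, ¬ rel m x ∧ m < x} with hP
  have hPinf : ∀ L : List ℕ, (∀ m ∈ L, m ∈ S) → (P L).Infinite := by
    intro L
    induction L with
    | nil =>
      intro _
      have : P [] = S := by
        ext x; simp [hP]
      rw [this]; exact hS
    | cons m L ih =>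
      intro hmem
      have hsub : P L \ ({x | x ∈ S ∧ rel m x} ∪ Set.Iic m) ⊆ P (m :: L) := by
        rintro x ⟨⟨hxS, hxL⟩, hx2⟩
        refine ⟨hxS, fun m' hm' => ?_⟩
        rcases List.mem_cons.1 hm' with rfl | hm'
        · constructor
          · intro hrel; exact hx2 (Or.inl ⟨hxS, hrel⟩)
          · by_contra hlt
            exact hx2 (Or.inr (Set.mem_Iic.2 (by omega)))
        · exact hxL m' hm'
      have hinf : (P L \ ({x | x ∈ S ∧ rel m x} ∪ Set.Iic m)).Infinite := by
        apply Set.Infinite.diff (ih (fun m' hm' => hmem m' (List.mem_cons_of_mem m hm')))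
        exact (hfin m (hmem m List.mem_cons_self)).union (Set.finite_Iic m)
      exact hinf.mono hsub
  set pick : List ℕ → ℕ := fun L => if h : (P L).Nonempty then h.choose else 0 with hpick
  set L : ℕ → List ℕ := fun k => Nat.rec [] (fun _ Lk => Lk ++ [pick Lk]) k with hL
  have hLsucc : ∀ k, L (k + 1) = L k ++ [pick (L k)] := fun k => rfl
  set g : ℕ → ℕ := fun k => pick (L k) with hg
  -- invariant: members of L k are in S
  have hinv : ∀ k, (∀ m ∈ L k, m ∈ S) := by
    intro k
    induction k with
    | zero => intro m hm; cases hm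
    | succ k ih =>
      rw [hLsucc]
      intro m hm
      rcases List.mem_append.1 hm with hm | hm
      · exact ih m hm
      · rw [List.mem_singleton.1 hm]
        have hne : (P (L k)).Nonempty := (hPinf (L k) ih).nonempty
        have : pick (L k) ∈ P (L k) := by rw [hpick]; simp only [dif_pos hne]; exact hne.choose_spec
        exact this.1
  have hgP : ∀ k, g k ∈ P (L k) := by
    intro k
    have hne : (P (L k)).Nonempty := (hPinf (L k) (hinv k)).nonempty
    rw [hg, hpick]; simp only [dif_pos hne]; exact hne.choose_spec
  have hmemL : ∀ i k, i < k → g i ∈ L k := by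
    intro i k hik
    induction k with
    | zero => omega
    | succ k ih =>
      rw [hLsucc, List.mem_append]
      rcases Nat.lt_or_ge i k with h | h
      · exact Or.inl (ih h)
      · have : i = k := by omega
        subst this
        exact Or.inr (List.mem_singleton.2 rfl)
  refine ⟨g, ?_, fun i => (hgP i).1, fun i j hij => ((hgP j).2 (g i) (hmemL i j hij)).1⟩
  intro i j hij
  exact ((hgP j).2 (g i) (hmemL i j hij)).2

lemma tpath_self (hG : G.IsTree) (x : V) : tpath hG x x = Walk.nil :=
  (eq_tpath hG (Walk.IsPath.nil)).symm

/-! ### the star case -/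

lemma star_case {G : SimpleGraph V} (hG : G.IsTree) {u : ℕ → V}
    (hu : Function.Injective u) {c : V} {g : ℕ → ℕ} (hg : StrictMono g)
    (hgc : ∀ i, u (g i) ≠ c)
    (hsep : ∀ i j, i < j → Sep hG c (u (g i)) (u (g j))) :
    ∃ (a : ℕ → ℕ) (B : Set ℕ), StrictMono a ∧ B.Infinite ∧
      (∀ b ∈ B, ∀ i j, u b ∉ (tpath hG (u (a i)) (u (a j))).support) ∧
      (∀ x y : V, G.Adj x y → ∃ k, x ∉ Dset hG u a k ∨ y ∉ Dset hG u a k) := by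
  have hpair : ∀ i j, i ≠ j → Sep hG c (u (g i)) (u (g j)) := by
    intro i j hij
    rcases Nat.lt_or_ge i j with h | h
    · exact hsep i j h
    · exact (sep_comm hG).1 (hsep j i (by omega))
  set a : ℕ → ℕ := fun i => g (2 * i) with haa
  have ha : StrictMono a := fun i j hij => hg (by omega)
  refine ⟨a, Set.range (fun t => g (2 * t + 1)), ha, ?_, ?_, ?_⟩
  · apply Set.infinite_range_of_injective
    intro s t hst
    have := hg.injective hst
    omega
  · rintro b ⟨t, rfl⟩ i j hmem
    by_cases hij : i = j
    · subst hij
      rw [haa] at hmem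
      simp only [tpath_self hG, Walk.support_nil, List.mem_singleton] at hmem
      have := hu hmem
      have := hg.injective this
      omega
    · have h1 : Sep hG c (u (g (2 * t + 1))) (u (a i)) := hpair _ _ (by omega)
      have h2 : Sep hG c (u (g (2 * t + 1))) (u (a j)) := hpair _ _ (by omega)
      have hc1 : c ∈ (tpath hG (u (a i)) (u (g (2 * t + 1)))).support := mem_tpath_symm hG h1
      have := junction hG hmem hc1 h2
      exact hgc (2 * t + 1) this.symm
  · intro x y hxy
    by_contra hcon
    push_neg at hcon
    have key : ∀ v : V, (∀ k, v ∈ Dset hG u a k) → v = c := by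
      intro v hv
      by_contra hvc
      have step : ∀ i j, v ∈ (tpath hG (u (a i)) (u (a j))).support →
          ¬ Sep hG c v (u (a i)) ∨ ¬ Sep hG c v (u (a j)) := by
        intro i j hmem
        by_contra hb
        push_neg at hb
        have h1 : c ∈ (tpath hG (u (a i)) v).support := mem_tpath_symm hG hb.1
        exact hvc (junction hG hmem h1 hb.2).symm
      obtain ⟨i0, _, j0, _, hm0⟩ := hv 0
      have h1 := step i0 j0 hm0
      set p1 := if ¬ Sep hG c v (u (a i0)) then i0 else j0 with hp1
      have hp1' : ¬ Sep hG c v (u (a p1)) := by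
        rw [hp1]
        split
        · rename_i h; exact h
        · rename_i h; rcases h1 with h' | h'
          · exact absurd h' h
          · exact h'
      obtain ⟨i2, hi2, j2, hj2, hm2⟩ := hv (p1 + 1)
      have h2 := step i2 j2 hm2
      set p2 := if ¬ Sep hG c v (u (a i2)) then i2 else j2 with hp2
      have hp2' : ¬ Sep hG c v (u (a p2)) := by
        rw [hp2]
        split
        · rename_i h; exact h
        · rename_i h; rcases h2 with h' | h'
          · exact absurd h' h
          · exact h'
      have hp2big : p1 + 1 ≤ p2 := by
        rw [hp2]; split <;> omega
      have hns : ¬ Sep hG c (u (a p1)) (u (a p2)) := by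
        apply not_sep_trans hG _ hp2'
        intro hss
        exact hp1' ((sep_comm hG).1 hss)
      exact hns (hpair _ _ (by omega))
    have hx := key x (fun k => (hcon k).1)
    have hy := key y (fun k => (hcon k).2)
    rw [hx, hy] at hxy
    exact G.loopless.irrefl c hxy


/-! ### the spine recursion -/

/-- Data of the spine recursion: a one-sided infinite path `r` in the tree together
with nested infinite index sets `S k` of sequence elements lying beyond `r k`. -/
structure RecData (hG : G.IsTree) (u : ℕ → V) : Type _ where
  r : ℕ → V
  S : ℕ → Set ℕ
  r0 : r 0 = u 0
  S0 : S 0 = {n | u n ≠ u 0}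
  SK : ∀ k, (S k).Infinite
  Sne : ∀ k, ∀ n ∈ S k, u n ≠ r k
  Ssub : ∀ k, S (k + 1) ⊆ S k
  adj : ∀ k, G.Adj (r k) (r (k + 1))
  notsep : ∀ k, ∀ n ∈ S (k + 1), ¬ Sep hG (r k) (u n) (r (k + 1))
  dropsep : ∀ k, ∀ n ∈ S k, n ∉ S (k + 1) → u n ≠ r (k + 1) →
    ∀ n' ∈ S (k + 1), Sep hG (r k) (u n) (u n')

lemma exists_recData {G : SimpleGraph V} (hG : G.IsTree) (u : ℕ → V)
    (hu : Function.Injective u)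
    (hns : ∀ (c : V) (S : Set ℕ), S.Infinite → (∀ n ∈ S, u n ≠ c) →
      ∃ n₀ ∈ S, {n | n ∈ S ∧ ¬ Sep hG c (u n) (u n₀)}.Infinite) :
    Nonempty (RecData hG u) := by
  classical
  obtain ⟨stepFn, hstepFn⟩ : ∃ stepFn : V × Set ℕ → V × Set ℕ,
      ∀ p : V × Set ℕ,
        stepFn p = if h : ∃ n₀ ∈ p.2, {n | n ∈ p.2 ∧ ¬ Sep hG p.1 (u n) (u n₀)}.Infinite then
          (nxt hG p.1 (u h.choose),
            {n | n ∈ p.2 ∧ ¬ Sep hG p.1 (u n) (u h.choose) ∧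
              u n ≠ nxt hG p.1 (u h.choose)})
        else p := ⟨_, fun _ => rfl⟩
  obtain ⟨st, hst0, hstsucc⟩ : ∃ st : ℕ → V × Set ℕ,
      st 0 = (u 0, {n | u n ≠ u 0}) ∧ ∀ k, st (k + 1) = stepFn (st k) :=
    ⟨fun k => stepFn^[k] (u 0, {n | u n ≠ u 0}), rfl,
      fun k => Function.iterate_succ_apply' stepFn k _⟩
  obtain ⟨r, hrdef⟩ : ∃ r : ℕ → V, ∀ k, r k = (st k).1 := ⟨_, fun _ => rfl⟩
  obtain ⟨S, hSdef⟩ : ∃ S : ℕ → Set ℕ, ∀ k, S k = (st k).2 := ⟨_, fun _ => rfl⟩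
  -- base invariant
  have hP : ∀ k, (S k).Infinite ∧ ∀ n ∈ S k, u n ≠ r k := by
    intro k
    induction k with
    | zero =>
      constructor
      · have hfin : {n | u n = u 0}.Finite := by
          apply Set.Finite.subset (Set.finite_singleton 0)
          intro n hn
          exact hu hn
        rw [hSdef 0, hst0]
        exact Set.Finite.infinite_compl hfin
      · intro n hn
        rw [hSdef 0, hst0] at hn
        rw [hrdef 0, hst0]
        exact hn
    | succ k ih =>
      have hcond : ∃ n₀ ∈ (st k).2, {n | n ∈ (st k).2 ∧
          ¬ Sep hG (st k).1 (u n) (u n₀)}.Infinite := by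
        rw [← hSdef, ← hrdef]
        exact hns (r k) (S k) ih.1 ih.2
      have hstep : st (k + 1) = (nxt hG (st k).1 (u hcond.choose),
          {n | n ∈ (st k).2 ∧ ¬ Sep hG (st k).1 (u n) (u hcond.choose) ∧
            u n ≠ nxt hG (st k).1 (u hcond.choose)}) := by
        rw [hstsucc, hstepFn]
        simp only [dif_pos hcond]
      constructor
      · have h1 : {n | n ∈ (st k).2 ∧ ¬ Sep hG (st k).1 (u n) (u hcond.choose)}.Infinite :=
          hcond.choose_spec.2
        have h2 : (S (k+1)) ⊇ {n | n ∈ (st k).2 ∧ ¬ Sep hG (st k).1 (u n) (u hcond.choose)}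
            \ {n | u n = nxt hG (st k).1 (u hcond.choose)} := by
          rintro n ⟨⟨h3, h4⟩, h5⟩
          rw [hSdef, hstep]
          exact ⟨h3, h4, h5⟩
        apply Set.Infinite.mono h2
        apply Set.Infinite.diff h1
        apply Set.Finite.subset (Set.finite_singleton
          (if h : ∃ n, u n = nxt hG (st k).1 (u hcond.choose) then h.choose else 0))
        intro n hn
        have hex : ∃ n, u n = nxt hG (st k).1 (u hcond.choose) := ⟨n, hn⟩
        simp only [Set.mem_singleton_iff, dif_pos hex]
        exact hu (hn.trans hex.choose_spec.symm)
      · intro n hn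
        rw [hSdef, hstep] at hn
        rw [hrdef, hstep]
        exact hn.2.2
  -- uniform step unfolding
  have hcond : ∀ k, ∃ n₀ ∈ (st k).2, {n | n ∈ (st k).2 ∧
      ¬ Sep hG (st k).1 (u n) (u n₀)}.Infinite := by
    intro k
    rw [← hSdef, ← hrdef]
    exact hns (r k) (S k) (hP k).1 (hP k).2
  have hstep : ∀ k, st (k + 1) = (nxt hG (st k).1 (u (hcond k).choose),
      {n | n ∈ (st k).2 ∧ ¬ Sep hG (st k).1 (u n) (u (hcond k).choose) ∧
        u n ≠ nxt hG (st k).1 (u (hcond k).choose)}) := by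
    intro k
    rw [hstsucc, hstepFn]
    simp only [dif_pos (hcond k)]
  have hne0 : ∀ k, u ((hcond k).choose) ≠ r k := by
    intro k
    apply (hP k).2
    rw [hSdef]
    exact (hcond k).choose_spec.1
  have hrne : ∀ k, u ((hcond k).choose) ≠ (st k).1 := by
    intro k
    have := hne0 k
    rw [hrdef k] at this
    exact this
  refine ⟨⟨r, S, by rw [hrdef 0, hst0], by rw [hSdef 0, hst0],
    fun k => (hP k).1, fun k => (hP k).2, ?_, ?_, ?_, ?_⟩⟩
  · -- Ssub
    intro k n hn
    rw [hSdef, hstep k] at hn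
    rw [hSdef]
    exact hn.1
  · -- adj
    intro k
    rw [hrdef k, hrdef (k+1), hstep k]
    exact adj_nxt hG (Ne.symm (hrne k))
  · -- notsep
    intro k n hn
    rw [hSdef, hstep k] at hn
    have h1 : ¬ Sep hG (st k).1 (u n) (u ((hcond k).choose)) := hn.2.1
    have h2 : ¬ Sep hG (st k).1 (nxt hG (st k).1 (u ((hcond k).choose)))
        (u ((hcond k).choose)) := not_sep_nxt hG (Ne.symm (hrne k))
    rw [hrdef k, hrdef (k+1), hstep k]
    exact not_sep_trans hG h1 (fun hs => h2 ((sep_comm hG).1 hs))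
  · -- dropsep
    intro k n hnk hnk1 hnr n' hn'
    rw [hSdef] at hnk
    rw [hrdef, hstep k] at hnr
    have hsep1 : Sep hG (st k).1 (u n) (u ((hcond k).choose)) := by
      by_contra hcon
      apply hnk1
      rw [hSdef, hstep k]
      exact ⟨hnk, hcon, hnr⟩
    rw [hSdef, hstep k] at hn'
    have h2 : ¬ Sep hG (st k).1 (u n') (u ((hcond k).choose)) := hn'.2.1
    rw [hrdef]
    by_contra hcon
    exact not_sep_trans hG hcon h2 hsep1


lemma length_le_of_nodup_mem {l : List V} {f : ℕ → V} {k : ℕ}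
    (hinj : ∀ i j, i < j → f i ≠ f j) (hmem : ∀ i, i < k → f i ∈ l) :
    k ≤ l.length := by
  classical
  have hnd : ((List.range k).map f).Nodup := by
    refine List.Nodup.map_on ?_ List.nodup_range
    intro x hx y hy hxy
    rcases lt_trichotomy x y with h | h | h
    · exact absurd hxy (hinj x y h)
    · exact h
    · exact absurd hxy.symm (hinj y x h)
  have h1 : ((List.range k).map f).toFinset.card = k := by
    rw [List.toFinset_card_of_nodup hnd, List.length_map, List.length_range]
  have h2 : ((List.range k).map f).toFinset ⊆ l.toFinset := by
    intro x hx
    rw [List.mem_toFinset] at hx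
    obtain ⟨i, hi, rfl⟩ := List.mem_map.1 hx
    rw [List.mem_toFinset]
    exact hmem i (List.mem_range.1 hi)
  calc k = ((List.range k).map f).toFinset.card := h1.symm
  _ ≤ l.toFinset.card := Finset.card_le_card h2
  _ ≤ l.length := l.toFinset_card_le

namespace RecData

variable {hG : G.IsTree} {u : ℕ → V} (D : RecData hG u)

lemma anti : ∀ {j k : ℕ}, j ≤ k → D.S k ⊆ D.S j := by
  intro j k hjk
  induction k with
  | zero =>
    have : j = 0 := by omega
    subst this; exact fun _ h => h
  | succ k ih =>
    rcases Nat.lt_or_ge j (k + 1) with h | h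
    · exact fun n hn => ih (by omega) (D.Ssub k hn)
    · have : j = k + 1 := by omega
      subst this; exact fun _ h => h

lemma K1 (j k : ℕ) (hjk : j < k) {n m : ℕ} (hn : n ∈ D.S k) (hm : m ∈ D.S k) :
    ¬ Sep hG (D.r j) (u n) (u m) := by
  have hn' : n ∈ D.S (j + 1) := D.anti (by omega) hn
  have hm' : m ∈ D.S (j + 1) := D.anti (by omega) hm
  have h1 := D.notsep j n hn'
  have h2 := D.notsep j m hm'
  exact not_sep_trans hG h1 (fun hs => h2 ((sep_comm hG).1 hs))

lemma I6 (k : ℕ) {n : ℕ} (hn : n ∈ D.S (k + 1)) :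
    D.r (k + 1) = nxt hG (D.r k) (u n) :=
  eq_nxt hG (D.adj k) (fun hs => D.notsep k n hn ((sep_comm hG).1 hs))

lemma I7 (k : ℕ) {n : ℕ} (hn : n ∈ D.S (k + 1)) :
    D.r (k + 1) ∈ (tpath hG (D.r k) (u n)).support := by
  rw [D.I6 k hn]
  exact nxt_mem_tpath hG (Ne.symm (D.Sne k n (D.Ssub k hn)))

lemma I10' : ∀ (d i : ℕ), ∀ n ∈ D.S (i + d), D.r (i + d) ∈ (tpath hG (D.r i) (u n)).support := by
  intro d
  induction d with
  | zero => intro i n _; exact start_mem_tpath hG _ _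
  | succ d ih =>
    intro i n hn
    have hn1 : n ∈ D.S (i + 1) := D.anti (by omega) hn
    have h7 : D.r (i + 1) ∈ (tpath hG (D.r i) (u n)).support := D.I7 i hn1
    have hn2 : n ∈ D.S (i + 1 + d) := by
      have e : i + 1 + d = i + (d + 1) := by omega
      rw [e]; exact hn
    have := ih (i + 1) n hn2
    have e : i + 1 + d = i + (d + 1) := by omega
    rw [e] at this
    exact tpath_support_right_subset hG h7 this

lemma I10 (i j : ℕ) (hij : i ≤ j) {n : ℕ} (hn : n ∈ D.S j) :
    D.r j ∈ (tpath hG (D.r i) (u n)).support := by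
  have e : j = i + (j - i) := by omega
  rw [e] at hn ⊢
  exact D.I10' (j - i) i n hn

lemma rinj : ∀ i j : ℕ, i < j → D.r i ≠ D.r j := by
  intro i j hij he
  obtain ⟨n, hn⟩ := (D.SK j).nonempty
  have h10 : D.r j ∈ (tpath hG (D.r (i + 1)) (u n)).support := D.I10 (i + 1) j hij hn
  rw [← he] at h10
  exact D.notsep i n (D.anti hij hn) ((sep_comm hG).1 h10)

lemma K3 (n : ℕ) : ∃ k, n ∉ D.S k := by
  by_contra h
  push_neg at h
  have hlen := length_le_of_nodup_mem (l := (tpath hG (D.r 0) (u n)).support)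
    (f := D.r) (k := (tpath hG (D.r 0) (u n)).support.length + 1)
    (D.rinj) (fun j _ => D.I10 0 j (by omega) (h j))
  omega

lemma K2 (v : V) (k : ℕ) (hk : (tpath hG (D.r 0) v).support.length < k)
    {n m : ℕ} (hn : n ∈ D.S k) (hm : m ∈ D.S k)
    (hmem : v ∈ (tpath hG (u n) (u m)).support) : False := by
  have hall : ∀ j, j < k → D.r j ∈ (tpath hG (D.r 0) v).support := by
    intro j hj
    have h1 : D.r j ∈ (tpath hG (D.r 0) (u n)).support :=
      D.I10 0 j (by omega) (D.anti (le_of_lt hj) hn)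
    have h2 : D.r j ∉ (tpath hG v (u n)).support := by
      intro hmem2
      have hsub : (tpath hG (u n) v).support ⊆ (tpath hG (u n) (u m)).support :=
        tpath_support_left_subset hG hmem
      exact D.K1 j k hj hn hm (hsub (mem_tpath_symm hG hmem2))
    rcases tpath_support_triangle hG (y := v) h1 with h | h
    · exact h
    · exact absurd h h2
  exact absurd (length_le_of_nodup_mem D.rinj hall) (by omega)


/-- the level at which index `n` falls out of the nested sets -/
noncomputable def Lev (n : ℕ) : ℕ := Nat.find (D.K3 n)

lemma not_mem_Lev (n : ℕ) : n ∉ D.S (D.Lev n) := Nat.find_spec (D.K3 n)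

lemma mem_of_lt_Lev {n k : ℕ} (hk : k < D.Lev n) : n ∈ D.S k := by
  have := Nat.find_min (D.K3 n) hk
  rw [not_not] at this
  exact this

lemma lt_Lev_of_mem {n k : ℕ} (hk : n ∈ D.S k) : k < D.Lev n := by
  by_contra h
  push_neg at h
  exact D.not_mem_Lev n (D.anti h hk)

lemma sep_early (m q : ℕ) (hq1 : 1 ≤ q) (hqm : q ≤ m) {b n'' : ℕ} (hb : b ∈ D.S m)
    (ha1 : n'' ∈ D.S (q - 1)) (ha2 : n'' ∉ D.S q) :
    Sep hG (D.r m) (u b) (u n'') := by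
  by_cases hsp : u n'' = D.r q
  · have h10 : D.r m ∈ (tpath hG (D.r q) (u b)).support := D.I10 q m hqm hb
    rw [← hsp] at h10
    exact mem_tpath_symm hG h10
  · have hq' : q - 1 + 1 = q := by omega
    have ha1' : n'' ∈ D.S (q - 1) := ha1
    have ha2' : n'' ∉ D.S (q - 1 + 1) := by rw [hq']; exact ha2
    have hsp' : u n'' ≠ D.r (q - 1 + 1) := by rw [hq']; exact hsp
    have hbq : b ∈ D.S (q - 1 + 1) := by rw [hq']; exact D.anti hqm hb
    have hdrop : Sep hG (D.r (q - 1)) (u n'') (u b) :=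
      D.dropsep (q - 1) n'' ha1' ha2' hsp' b hbq
    have h10 : D.r m ∈ (tpath hG (D.r (q - 1)) (u b)).support :=
      D.I10 (q - 1) m (by omega) hb
    have hmem : D.r m ∈ (tpath hG (u n'') (u b)).support :=
      tpath_support_right_subset hG hdrop h10
    exact mem_tpath_symm hG hmem

end RecData

lemma not_mem_tpath_of_sep (hG : G.IsTree) {c z x y : V} (hzc : z ≠ c)
    (h1 : Sep hG c z x) (h2 : Sep hG c z y) : z ∉ (tpath hG x y).support := by
  intro hmem
  have ha : c ∈ (tpath hG x z).support := mem_tpath_symm hG h1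
  exact hzc (junction hG hmem ha h2).symm


/-- bad-pair conclusion shape -/
def BadPair (hG : G.IsTree) (u : ℕ → V) : Prop :=
  ∃ (a : ℕ → ℕ) (B : Set ℕ), StrictMono a ∧ B.Infinite ∧
    (∀ b ∈ B, ∀ i j, u b ∉ (tpath hG (u (a i)) (u (a j))).support) ∧
    (∀ x y : V, G.Adj x y → ∃ k, x ∉ Dset hG u a k ∨ y ∉ Dset hG u a k)

lemma escape_Z {hG : G.IsTree} {u : ℕ → V} (D : RecData hG u) {a : ℕ → ℕ}
    (haS : ∀ i, a i ∈ D.S i) :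
    ∀ x y : V, G.Adj x y → ∃ k, x ∉ Dset hG u a k ∨ y ∉ Dset hG u a k := by
  intro x y _
  refine ⟨(tpath hG (D.r 0) x).support.length + 1, Or.inl ?_⟩
  rintro ⟨i, hi, j, hj, hmem⟩
  exact D.K2 x ((tpath hG (D.r 0) x).support.length + 1) (by omega)
    (D.anti hi (haS i)) (D.anti hj (haS j)) hmem

lemma single_level_bad {hG : G.IsTree} {u : ℕ → V} (D : RecData hG u) (m : ℕ)
    (hOff : {n | n ∈ D.S m ∧ n ∉ D.S (m + 1) ∧ u n ≠ D.r (m + 1)}.Infinite) :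
    BadPair hG u := by
  obtain ⟨a, ha, haS⟩ := exists_strictMono_mem (T := fun i => D.S (m + 1 + i))
    (fun i => D.SK (m + 1 + i))
  have haS' : ∀ i, a i ∈ D.S i := fun i => D.anti (by omega) (haS i)
  refine ⟨a, _, ha, hOff, ?_, escape_Z D haS'⟩
  rintro b ⟨hb1, hb2, hb3⟩ i j
  have hsep : ∀ i', Sep hG (D.r m) (u b) (u (a i')) := fun i' =>
    D.dropsep m b hb1 hb2 hb3 (a i') (D.anti (by omega) (haS i'))
  exact not_mem_tpath_of_sep hG (D.Sne m b hb1) (hsep i) (hsep j)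


lemma interleaved_bad {hG : G.IsTree} {u : ℕ → V} (D : RecData hG u)
    (hA : ∀ K, ∃ m, K ≤ m ∧ ∃ n, n ∈ D.S m ∧ n ∉ D.S (m + 1) ∧ u n ≠ D.r (m + 1)) :
    BadPair hG u := by
  classical
  have hnxA : ∀ (p : ℕ × ℕ), ∃ A', A' ∈ D.S (p.2 + 1) ∧ p.1 < A' := fun p => by
    obtain ⟨b, hb, hlt⟩ := (D.SK (p.2 + 1)).exists_gt p.1
    exact ⟨b, hb, hlt⟩
  choose nxA hnxA1 hnxA2 using hnxA
  choose nxM hnxM1 hnxM2 using hA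
  obtain ⟨A0, hA0⟩ := (D.SK 1).nonempty
  obtain ⟨state, hst0, hstS⟩ : ∃ st : ℕ → ℕ × ℕ,
      st 0 = (A0, nxM (D.Lev A0)) ∧
      ∀ t, st (t + 1) = (nxA (st t), nxM (max ((st t).2 + 1) (D.Lev (nxA (st t))))) :=
    ⟨fun t => Nat.rec (A0, nxM (D.Lev A0))
      (fun _ p => (nxA p, nxM (max (p.2 + 1) (D.Lev (nxA p))))) t, rfl, fun _ => rfl⟩
  obtain ⟨a, hadef⟩ : ∃ a : ℕ → ℕ, ∀ t, a t = (state t).1 := ⟨_, fun _ => rfl⟩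
  obtain ⟨m, hmdef⟩ : ∃ m : ℕ → ℕ, ∀ t, m t = (state t).2 := ⟨_, fun _ => rfl⟩
  have ha0 : a 0 = A0 := by rw [hadef, hst0]
  have hm0 : m 0 = nxM (D.Lev A0) := by rw [hmdef, hst0]
  have haS1 : ∀ t, a (t + 1) = nxA (state t) := by
    intro t; rw [hadef, hstS]
  have hmS1 : ∀ t, m (t + 1) = nxM (max (m t + 1) (D.Lev (a (t + 1)))) := by
    intro t; rw [hmdef, hstS, hadef, hstS, hmdef]
  have hstep_mem : ∀ t, a (t + 1) ∈ D.S (m t + 1) := by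
    intro t; rw [haS1, hmdef]; exact hnxA1 (state t)
  have hstep_lt : ∀ t, a t < a (t + 1) := by
    intro t; rw [haS1, hadef]; exact hnxA2 (state t)
  have hLev : ∀ t, D.Lev (a t) ≤ m t := by
    intro t
    cases t with
    | zero => rw [ha0, hm0]; exact hnxM1 (D.Lev A0)
    | succ t =>
      rw [hmS1]
      exact le_trans (le_max_right _ _) (hnxM1 _)
  have hmlt : ∀ t, m t < m (t + 1) := by
    intro t
    rw [hmS1]
    have := hnxM1 (max (m t + 1) (D.Lev (a (t + 1))))
    omega
  have hmmono : StrictMono m := strictMono_nat_of_lt_succ hmlt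
  have haS : ∀ i, a i ∈ D.S i := by
    intro i
    cases i with
    | zero => rw [ha0]; exact D.anti (by omega) hA0
    | succ t =>
      have h1 := hstep_mem t
      have h2 : t ≤ m t := hmmono.le_apply
      exact D.anti (by omega) h1
  have hdeep : ∀ t i, t < i → a i ∈ D.S (m t + 1) := by
    intro t i hti
    cases i with
    | zero => omega
    | succ j =>
      have h1 := hstep_mem j
      have h2 : m t ≤ m j := hmmono.monotone (by omega)
      exact D.anti (by omega) h1
  have hOffd : ∀ t, ∃ n, n ∈ D.S (m t) ∧ n ∉ D.S (m t + 1) ∧ u n ≠ D.r (m t + 1) := by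
    intro t
    cases t with
    | zero => rw [hm0]; exact hnxM2 (D.Lev A0)
    | succ t => rw [hmS1]; exact hnxM2 _
  choose b hb1 hb2 hb3 using hOffd
  have hbinj : Function.Injective b := by
    intro s t hst
    by_contra hne
    rcases Nat.lt_or_ge s t with h | h
    · have : b t ∈ D.S (m s + 1) := D.anti (by have := hmmono h; omega) (hb1 t)
      rw [← hst] at this
      exact hb2 s this
    · have h' : t < s := by omega
      have : b s ∈ D.S (m t + 1) := D.anti (by have := hmmono h'; omega) (hb1 s)
      rw [hst] at this
      exact hb2 t this
  have hSepAll : ∀ t i, Sep hG (D.r (m t)) (u (b t)) (u (a i)) := by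
    intro t i
    rcases Nat.lt_or_ge t i with h | h
    · exact D.dropsep (m t) (b t) (hb1 t) (hb2 t) (hb3 t) (a i) (hdeep t i h)
    · have hq1 : 1 ≤ D.Lev (a i) := D.lt_Lev_of_mem (D.anti (by omega) (haS i))
      have hqm : D.Lev (a i) ≤ m t := le_trans (hLev i) (hmmono.monotone h)
      exact D.sep_early (m t) (D.Lev (a i)) hq1 hqm (hb1 t)
        (D.mem_of_lt_Lev (by omega)) (D.not_mem_Lev (a i))
  refine ⟨a, Set.range b, strictMono_nat_of_lt_succ hstep_lt,
    Set.infinite_range_of_injective hbinj, ?_, escape_Z D haS⟩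
  rintro w ⟨t, rfl⟩ i j
  exact not_mem_tpath_of_sep hG (D.Sne (m t) (b t) (hb1 t)) (hSepAll t i) (hSepAll t j)


lemma almost_ray_case {G : SimpleGraph V} {hG : G.IsTree} {u : ℕ → V}
    (hu : Function.Injective u) (D : RecData hG u) {H : G.Subgraph}
    (hH : IsConvexHullSubtree G (Set.range u) H)
    (hfin : ∀ mm, {n | n ∈ D.S mm ∧ n ∉ D.S (mm + 1) ∧ u n ≠ D.r (mm + 1)}.Finite)
    (hK : ∃ K, ∀ mm, K ≤ mm → ∀ n, n ∈ D.S mm → n ∉ D.S (mm + 1) → u n = D.r (mm + 1)) :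
    IsAlmostRaySubgraph H := by
  classical
  obtain ⟨K, hKs⟩ := hK
  have HT : H.coe.IsTree := hH.1
  have Hconn : H.Connected := Subgraph.connected_iff'.2 HT.isConnected
  have huH : ∀ n, u n ∈ H.verts := fun n => hH.2.1 ⟨n, rfl⟩
  have hrH : ∀ j, D.r j ∈ H.verts := by
    intro j
    cases j with
    | zero => rw [D.r0]; exact huH 0
    | succ j =>
      obtain ⟨n, hn⟩ := (D.SK (j + 1)).nonempty
      have h10 : D.r (j + 1) ∈ (tpath hG (D.r 0) (u n)).support :=
        D.I10 0 (j + 1) (by omega) hn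
      have h0H : D.r 0 ∈ H.verts := by rw [D.r0]; exact huH 0
      exact tpath_support_subset_verts hG Hconn h0H (huH n) h10
  have hAdjH : ∀ j, H.Adj (D.r j) (D.r (j + 1)) := by
    intro j
    obtain ⟨n, hn⟩ := (D.SK (j + 1)).nonempty
    have hne : D.r j ≠ u n := Ne.symm (D.Sne j n (D.Ssub j hn))
    obtain ⟨w, hadj, q, hq, hxq, htp⟩ := exists_cons_of_ne hG hne
    have hw : w = D.r (j + 1) := by rw [D.I6 j hn]; exact (nxt_eq_of_cons hG htp).symm
    have hedge : s(D.r j, D.r (j + 1)) ∈ (tpath hG (D.r j) (u n)).edges := by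
      rw [htp, ← hw, Walk.edges_cons]
      exact List.mem_cons_self
    exact adj_of_mem_edges_toSubgraph_le (tpath_toSubgraph_le hG Hconn (hrH j) (huH n)) hedge
  have hBadfin : ∀ j, {n | n ∉ D.S j}.Finite := by
    intro j
    induction j with
    | zero =>
      apply Set.Finite.subset (Set.finite_singleton 0)
      intro n hn
      rw [D.S0] at hn
      simp only [Set.mem_setOf_eq, not_not] at hn
      exact hu hn
    | succ j ih =>
      have hsub : {n | n ∉ D.S (j + 1)} ⊆ {n | n ∉ D.S j} ∪
          {n | n ∈ D.S j ∧ n ∉ D.S (j + 1) ∧ u n ≠ D.r (j + 1)} ∪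
          (u ⁻¹' {D.r (j + 1)}) := by
        intro n hn
        by_cases h1 : n ∈ D.S j
        · by_cases h2 : u n = D.r (j + 1)
          · exact Or.inr h2
          · exact Or.inl (Or.inr ⟨h1, hn, h2⟩)
        · exact Or.inl (Or.inl h1)
      exact Set.Finite.subset ((ih.union (hfin j)).union
        ((Set.finite_singleton (D.r (j + 1))).preimage hu.injOn)) hsub
  have hspine : ∀ n, n ∈ D.S K → ∃ q, K < q ∧ u n = D.r q := by
    intro n hn
    have hq := D.lt_Lev_of_mem hn
    refine ⟨D.Lev n, hq, ?_⟩
    have h1 : n ∈ D.S (D.Lev n - 1) := D.mem_of_lt_Lev (by omega)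
    have h2 : n ∉ D.S (D.Lev n - 1 + 1) := by
      rw [show D.Lev n - 1 + 1 = D.Lev n by omega]
      exact D.not_mem_Lev n
    have := hKs (D.Lev n - 1) (by omega) n h1 h2
    rw [show D.Lev n - 1 + 1 = D.Lev n by omega] at this
    exact this
  have hrinj : Function.Injective D.r := by
    intro i j hij
    by_contra hne
    rcases Nat.lt_or_ge i j with h | h
    · exact D.rinj i j h hij
    · exact D.rinj j i (by omega) hij.symm
  set R : G.Subgraph :=
    { verts := Set.range D.r
      Adj := fun x y => ∃ n, (x = D.r n ∧ y = D.r (n + 1)) ∨ (x = D.r (n + 1) ∧ y = D.r n)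
      adj_sub := by
        rintro x y ⟨n, ⟨rfl, rfl⟩ | ⟨rfl, rfl⟩⟩
        · exact D.adj n
        · exact (D.adj n).symm
      edge_vert := by
        rintro x y ⟨n, ⟨rfl, rfl⟩ | ⟨rfl, rfl⟩⟩
        · exact ⟨n, rfl⟩
        · exact ⟨n + 1, rfl⟩
      symm := by
        constructor
        rintro x y ⟨n, ⟨rfl, rfl⟩ | ⟨rfl, rfl⟩⟩
        · exact ⟨n, Or.inr ⟨rfl, rfl⟩⟩
        · exact ⟨n, Or.inl ⟨rfl, rfl⟩⟩ } with hRdef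
  have hRisray : IsRaySubgraph R := ⟨D.r, hrinj, rfl, fun x y => Iff.rfl⟩
  have hRconn : R.Connected := by
    rw [Subgraph.connected_iff']
    have hreach : ∀ n : ℕ, R.coe.Reachable ⟨D.r 0, ⟨0, rfl⟩⟩ ⟨D.r n, ⟨n, rfl⟩⟩ := by
      intro n
      induction n with
      | zero => exact Reachable.refl _
      | succ n ih =>
        refine ih.trans (Adj.reachable ?_)
        show R.Adj (D.r n) (D.r (n + 1))
        exact ⟨n, Or.inl ⟨rfl, rfl⟩⟩
    haveI : Nonempty R.verts := ⟨⟨D.r 0, ⟨0, rfl⟩⟩⟩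
    refine ⟨?_⟩
    intro x y
    obtain ⟨i, hi⟩ := x.2
    obtain ⟨j, hj⟩ := y.2
    have hx : x = ⟨D.r i, ⟨i, rfl⟩⟩ := Subtype.ext hi.symm
    have hy : y = ⟨D.r j, ⟨j, rfl⟩⟩ := Subtype.ext hj.symm
    rw [hx, hy]
    exact (hreach i).symm.trans (hreach j)
  set L : List V := (hBadfin K).toFinset.toList.map u with hLdef
  set T₀ : G.Subgraph := (tourWalk hG (u 0) L).toSubgraph with hT₀def
  have hLH : ∀ t ∈ L, t ∈ H.verts := by
    intro t ht
    obtain ⟨n, _, rfl⟩ := List.mem_map.1 ht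
    exact huH n
  have hT0conn : T₀.Connected := Walk.toSubgraph_connected _
  have hcoeTree : ∀ (T : G.Subgraph), T.Connected → T.coe.IsTree := fun T hc =>
    ⟨Subgraph.connected_iff'.1 hc,
      coe_isAcyclic_of_isAcyclic (SimpleGraph.IsTree.IsAcyclic hG) T⟩
  have hle1 : T₀ ≤ H := tourWalk_toSubgraph_le hG Hconn (huH 0) hLH
  have hle2 : R ≤ H := by
    constructor
    · rintro x ⟨j, rfl⟩
      exact hrH j
    · rintro x y ⟨n, ⟨rfl, rfl⟩ | ⟨rfl, rfl⟩⟩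
      · exact hAdjH n
      · exact (hAdjH n).symm
  have hu0T : u 0 ∈ T₀.verts := by
    rw [hT₀def, Walk.verts_toSubgraph]
    exact Walk.start_mem_support _
  have hu0R : u 0 ∈ R.verts := ⟨0, D.r0⟩
  have hsupconn : (T₀ ⊔ R).Connected := by
    apply Subgraph.connected_sup hT0conn.preconnected hRconn.preconnected
    exact ⟨u 0, hu0T, hu0R⟩
  have hrange : Set.range u ⊆ (T₀ ⊔ R).verts := by
    rintro v ⟨n, rfl⟩
    by_cases hn : n ∈ D.S K
    · obtain ⟨q, _, hq⟩ := hspine n hn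
      exact Or.inr ⟨q, hq.symm⟩
    · left
      rw [hT₀def, Walk.verts_toSubgraph]
      apply tourWalk_verts hG (u 0) L
      rw [hLdef]
      exact List.mem_map.2 ⟨n, by rw [Finset.mem_toList, Set.Finite.mem_toFinset]; exact hn, rfl⟩
  have hge : H ≤ T₀ ⊔ R := hH.2.2 (T₀ ⊔ R) (hcoeTree _ hsupconn) hrange
  refine ⟨R, T₀, hRisray, ⟨?_, hcoeTree _ hT0conn⟩, le_antisymm (sup_le hle1 hle2) hge⟩
  rw [hT₀def]
  exact toSubgraph_verts_finite _


lemma dichotomy {G : SimpleGraph V} (hG : G.IsTree) (u : ℕ → V)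
    (hu : Function.Injective u) (H : G.Subgraph)
    (hH : IsConvexHullSubtree G (Set.range u) H) :
    IsAlmostRaySubgraph H ∨ BadPair hG u := by
  classical
  by_cases hstar : ∃ (c : V) (g : ℕ → ℕ), StrictMono g ∧ (∀ i, u (g i) ≠ c) ∧
      ∀ i j, i < j → Sep hG c (u (g i)) (u (g j))
  · obtain ⟨c, g, h1, h2, h3⟩ := hstar
    exact Or.inr (star_case hG hu h1 h2 h3)
  · have hns : ∀ (c : V) (S : Set ℕ), S.Infinite → (∀ n ∈ S, u n ≠ c) →
        ∃ n₀ ∈ S, {n | n ∈ S ∧ ¬ Sep hG c (u n) (u n₀)}.Infinite := by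
      intro c S hS hSc
      by_contra hcon
      push_neg at hcon
      apply hstar
      have hfin : ∀ n ∈ S, {m | m ∈ S ∧ ¬ Sep hG c (u m) (u n)}.Finite := by
        intro n hn
        have h1 := hcon n hn
        apply h1.subset
        rintro m ⟨hm1, hm2⟩
        exact ⟨hm1, hm2⟩
      obtain ⟨g, hg1, hg2, hg3⟩ := exists_pairwise_transversal hS
        (rel := fun x y => ¬ Sep hG c (u y) (u x)) hfin
      refine ⟨c, g, hg1, fun i => hSc _ (hg2 i), fun i j hij => ?_⟩
      exact (sep_comm hG).1 (not_not.1 (hg3 i j hij))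
    obtain ⟨D⟩ := exists_recData hG u hu hns
    by_cases hA1 : ∃ m, {n | n ∈ D.S m ∧ n ∉ D.S (m + 1) ∧ u n ≠ D.r (m + 1)}.Infinite
    · obtain ⟨m, hm⟩ := hA1
      exact Or.inr (single_level_bad D m hm)
    by_cases hA2 : ∀ K, ∃ m, K ≤ m ∧ ∃ n, n ∈ D.S m ∧ n ∉ D.S (m + 1) ∧ u n ≠ D.r (m + 1)
    · exact Or.inr (interleaved_bad D hA2)
    · left
      push_neg at hA1 hA2
      obtain ⟨K, hK⟩ := hA2
      refine almost_ray_case hu D hH (fun mm => hA1 mm) ⟨K, ?_⟩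
      intro mm hmm n h1 h2
      have := hK mm hmm n
      tauto

end
end Stmt8

open Stmt8

/-- Let `u` be a sequence of pairwise distinct vertices of a tree `T` and
let `H` be the convex hull of its range. Then `H` is almost a ray iff, for every
non-degenerate labeling `l`, the existence of a Cauchy subsequence of `u` in
`(V(T), d_l)` implies that `u` itself is Cauchy in `(V(T), d_l)`. -/
theorem stmt8 {V : Type*} (G : SimpleGraph V) (hG : G.IsTree)
    (u : ℕ → V) (hu : Function.Injective u)
    (H : G.Subgraph) (hH : IsConvexHullSubtree G (Set.range u) H) :
    IsAlmostRaySubgraph H ↔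
      ∀ l : V → ℝ, (∀ w, 0 ≤ l w) → NondegenerateLabeling G l →
        ∀ d : V → V → ℝ, IsLabelDist G l d →
          (∃ φ : ℕ → ℕ, StrictMono φ ∧ CauchyWith d (u ∘ φ)) → CauchyWith d u := by
  constructor
  · intro hAR l hl0 hnd d hd hsub
    obtain ⟨φ, hφ, hC⟩ := hsub
    exact forward_dir hG hu (fun n => hH.2.1 ⟨n, rfl⟩) hAR hd hφ hC
  · intro hRHS
    rcases dichotomy hG u hu H hH with h | h
    · exact h
    · obtain ⟨a, B, ha, hB, hBout, hZ⟩ := h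
      exact absurd hRHS (bad_pair_contra hG hu ha hB hBout hZ)
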